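/- Let U > 0 and let a₁, a₂, b₁, b₂, c₁, c₂ ≥ 0 with a₂, b₂ not both the zero-interaction degenerate case. Define A₁ = γ₀U + (1/(2U))(c₁ + a₁ + b₁), A₂ = (W/(2U))m, B₁ = e^{t/T} m, B₂ = e^{-t/T}(γ₀ + τ/T) + e^{t/T} a₂', where m is a real number satisfying m² ≤ a₁' a₂' (Cauchy-Schwarz), a₁ ≥ W a₁', b₁ ≥ 0, c₁ ≥ 0, γ₀ > 0, W > 0, τ, T > 0. Then A₂B₁ < A₁B₂, so the 2×2 matrix [[A₁,A₂],[B₁,B₂]] is invertible. -/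
import Mathlib

/-- Abstract unique solvability of the MSAV 2×2 linear system: with
`A₁ = γ₀U + (1/(2U))(c₁ + a₁ + b₁)`, `A₂ = (W/(2U))m`, `B₁ = e^{t/T} m`,
`B₂ = e^{-t/T}(γ₀ + τ/T) + e^{t/T} a₂'`, where `m² ≤ a₁'a₂'` (Cauchy–Schwarz)
and `a₁ ≥ W a₁'`, one has `A₂B₁ < A₁B₂`. -/
theorem msav_matrix_invertible (U γ₀ W τ T t a₁ b₁ c₁ a₁' a₂' m : ℝ)
    (hU : 0 < U) (hγ : 0 < γ₀) (hW : 0 < W) (hτ : 0 < τ) (hT : 0 < T)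
    (ha₁' : 0 ≤ a₁') (ha₂' : 0 ≤ a₂') (hb₁ : 0 ≤ b₁) (hc₁ : 0 ≤ c₁)
    (hm : m ^ 2 ≤ a₁' * a₂') (ha₁ : W * a₁' ≤ a₁) :
    ((W / (2 * U)) * m) * (Real.exp (t / T) * m) <
      (γ₀ * U + (1 / (2 * U)) * (c₁ + a₁ + b₁)) *
        (Real.exp (-t / T) * (γ₀ + τ / T) + Real.exp (t / T) * a₂') := by
  have hE : 0 < Real.exp (t / T) := Real.exp_pos _
  have hF : 0 < Real.exp (-t / T) := Real.exp_pos _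
  have hTτ : 0 < γ₀ + τ / T := by positivity
  have hUinv : 0 < 1 / (2 * U) := by positivity
  have key : ((W / (2 * U)) * m) * (Real.exp (t / T) * m)
      ≤ ((1 / (2 * U)) * a₁) * (Real.exp (t / T) * a₂') := by
    have h1 : W * m ^ 2 ≤ a₁ * a₂' := by nlinarith
    have h2 := mul_le_mul_of_nonneg_left h1 (le_of_lt (mul_pos hUinv hE))
    have e1 : (W / (2 * U)) * m * (Real.exp (t / T) * m)
        = 1 / (2 * U) * Real.exp (t / T) * (W * m ^ 2) := by ring
    have e2 : (1 / (2 * U)) * a₁ * (Real.exp (t / T) * a₂')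
        = 1 / (2 * U) * Real.exp (t / T) * (a₁ * a₂') := by ring
    linarith
  have hpos : 0 < (γ₀ * U) * (Real.exp (-t / T) * (γ₀ + τ / T)) := by positivity
  nlinarith [mul_nonneg (mul_nonneg hUinv.le hc₁) (mul_nonneg hE.le ha₂'),
    mul_nonneg (mul_nonneg hUinv.le hb₁) (mul_nonneg hE.le ha₂'),
    mul_nonneg (mul_nonneg hUinv.le (le_trans (mul_nonneg hW.le ha₁') ha₁)) (mul_nonneg hF.le hTτ.le),
    mul_nonneg (mul_nonneg hUinv.le hc₁) (mul_nonneg hF.le hTτ.le),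
    mul_nonneg (mul_nonneg hUinv.le hb₁) (mul_nonneg hF.le hTτ.le),
    mul_nonneg (mul_nonneg hγ.le hU.le) (mul_nonneg hE.le ha₂')]
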